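/- Let L_d : ℝ^n × ℝ^n → ℝ be a differentiable discrete Lagrangian and A an n×n real matrix generating a one-parameter group of linear symmetries of L_d, i.e. L_d(exp(tA) q_0, exp(tA) q_1) = L_d(q_0, q_1) for all t ∈ ℝ and all (q_0,q_1) ∈ ℝ^n × ℝ^n. Define the discrete momentum J_d(q_0, q_1) = ⟨D_2 L_d(q_0, q_1), A q_1⟩. Then J_d is conserved along solutions of the discrete Euler–Lagrange equations: if (q_0,…,q_N) satisfies D_1 L_d(q_k, q_{k+1}) + D_2 L_d(q_{k-1}, q_k) = 0 for k = 1,…,N−1, then J_d(q_{k-1}, q_k) = J_d(q_k, q_{k+1}) for all such k. -/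

import Mathlib

/-- Partial derivative of a discrete Lagrangian with respect to its first argument. -/
noncomputable def D1 {n : ℕ}
    (Ld : EuclideanSpace ℝ (Fin n) × EuclideanSpace ℝ (Fin n) → ℝ)
    (a b : EuclideanSpace ℝ (Fin n)) : EuclideanSpace ℝ (Fin n) →L[ℝ] ℝ :=
  (fderiv ℝ Ld (a, b)).comp (ContinuousLinearMap.inl ℝ _ _)

/-- Partial derivative of a discrete Lagrangian with respect to its second argument. -/
noncomputable def D2 {n : ℕ}
    (Ld : EuclideanSpace ℝ (Fin n) × EuclideanSpace ℝ (Fin n) → ℝ)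
    (a b : EuclideanSpace ℝ (Fin n)) : EuclideanSpace ℝ (Fin n) →L[ℝ] ℝ :=
  (fderiv ℝ Ld (a, b)).comp (ContinuousLinearMap.inr ℝ _ _)

/-- The linear operator on `ℝⁿ` determined by an `n × n` matrix. -/
noncomputable def matOp {n : ℕ} (A : Matrix (Fin n) (Fin n) ℝ) :
    EuclideanSpace ℝ (Fin n) →L[ℝ] EuclideanSpace ℝ (Fin n) :=
  LinearMap.toContinuousLinearMap (Matrix.toEuclideanLin A)

lemma exp_apply_hasDerivAt {n : ℕ} (B : EuclideanSpace ℝ (Fin n) →L[ℝ] EuclideanSpace ℝ (Fin n))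
    (x : EuclideanSpace ℝ (Fin n)) :
    HasDerivAt (fun t : ℝ => NormedSpace.exp (t • B) x) (B x) 0 := by
  have h := hasDerivAt_exp_smul_const (𝕂 := ℝ) B (0 : ℝ)
  have h2 := h.clm_apply (hasDerivAt_const (0 : ℝ) x)
  have e0 : NormedSpace.exp ((0:ℝ) • B) = 1 := by
    rw [show (0:ℝ) • B = 0 from zero_smul ℝ B, NormedSpace.exp_zero]
  simpa [e0] using h2

lemma noether_key {n : ℕ}
    (Ld : EuclideanSpace ℝ (Fin n) × EuclideanSpace ℝ (Fin n) → ℝ)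
    (hLd : Differentiable ℝ Ld)
    (A : Matrix (Fin n) (Fin n) ℝ)
    (hsym : ∀ (t : ℝ) (q0 q1 : EuclideanSpace ℝ (Fin n)),
      Ld (NormedSpace.exp (t • matOp A) q0, NormedSpace.exp (t • matOp A) q1)
        = Ld (q0, q1))
    (q0 q1 : EuclideanSpace ℝ (Fin n)) :
    D1 Ld q0 q1 (matOp A q0) + D2 Ld q0 q1 (matOp A q1) = 0 := by
  set B := matOp A
  have hg : HasDerivAt
      (fun t : ℝ => (NormedSpace.exp (t • B) q0, NormedSpace.exp (t • B) q1))
      (B q0, B q1) 0 :=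
    (exp_apply_hasDerivAt B q0).prodMk (exp_apply_hasDerivAt B q1)
  have hcomp : HasDerivAt
      (fun t : ℝ => Ld (NormedSpace.exp (t • B) q0, NormedSpace.exp (t • B) q1))
      (fderiv ℝ Ld (q0, q1) (B q0, B q1)) 0 := by
    have hpt : (NormedSpace.exp ((0:ℝ) • B) q0, NormedSpace.exp ((0:ℝ) • B) q1)
        = (q0, q1) := by
      rw [show (0:ℝ) • B = 0 from zero_smul ℝ B, NormedSpace.exp_zero]
      rfl
    have hf : HasFDerivAt Ld (fderiv ℝ Ld (q0, q1))
        (NormedSpace.exp ((0:ℝ) • B) q0, NormedSpace.exp ((0:ℝ) • B) q1) := by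
      rw [hpt]; exact (hLd _).hasFDerivAt
    simpa [Function.comp_def] using hf.comp_hasDerivAt 0 hg
  have hconst : HasDerivAt
      (fun t : ℝ => Ld (NormedSpace.exp (t • B) q0, NormedSpace.exp (t • B) q1))
      0 0 := by
    have : (fun t : ℝ => Ld (NormedSpace.exp (t • B) q0, NormedSpace.exp (t • B) q1))
        = fun _ => Ld (q0, q1) := funext fun t => hsym t q0 q1
    rw [this]; exact hasDerivAt_const _ _
  have hzero : fderiv ℝ Ld (q0, q1) (B q0, B q1) = 0 := hcomp.unique hconst
  have hsplit : (B q0, B q1) = ((B q0, 0) : _ × _) + (0, B q1) := by simp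
  simp only [D1, D2, ContinuousLinearMap.comp_apply, ContinuousLinearMap.inl_apply,
    ContinuousLinearMap.inr_apply]
  rw [← (fderiv ℝ Ld (q0, q1)).map_add, ← hsplit, hzero]

/-- If the one-parameter group of linear maps `exp(tA)` acting diagonally leaves the
discrete Lagrangian invariant, then the discrete momentum
`J_d(q_0,q_1) = ⟨D₂L_d(q_0,q_1), A q_1⟩` is conserved along solutions of the discrete
Euler–Lagrange equations. -/
theorem stmt_5 {n N : ℕ}
    (Ld : EuclideanSpace ℝ (Fin n) × EuclideanSpace ℝ (Fin n) → ℝ)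
    (hLd : Differentiable ℝ Ld)
    (A : Matrix (Fin n) (Fin n) ℝ)
    (hsym : ∀ (t : ℝ) (q0 q1 : EuclideanSpace ℝ (Fin n)),
      Ld (NormedSpace.exp (t • matOp A) q0, NormedSpace.exp (t • matOp A) q1)
        = Ld (q0, q1))
    (q : ℕ → EuclideanSpace ℝ (Fin n))
    (hDEL : ∀ k : ℕ, 1 ≤ k → k ≤ N - 1 →
      D1 Ld (q k) (q (k + 1)) + D2 Ld (q (k - 1)) (q k) = 0) :
    ∀ k : ℕ, 1 ≤ k → k ≤ N - 1 →
      D2 Ld (q (k - 1)) (q k) (matOp A (q k))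
        = D2 Ld (q k) (q (k + 1)) (matOp A (q (k + 1))) := by
  intro k hk1 hkN
  have hkey := noether_key Ld hLd A hsym (q k) (q (k + 1))
  have hdel := hDEL k hk1 hkN
  have hdel' : D2 Ld (q (k - 1)) (q k) (matOp A (q k))
      = - D1 Ld (q k) (q (k + 1)) (matOp A (q k)) := by
    have := congrArg (fun (f : EuclideanSpace ℝ (Fin n) →L[ℝ] ℝ) => f (matOp A (q k))) hdel
    simp only [ContinuousLinearMap.add_apply, ContinuousLinearMap.zero_apply] at this
    linarith
  linarith
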